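/- arXiv:2307.12599 — 4 statements merged into one kernel-verified Lean document; each statement's English description precedes it below -/
import Mathlib

section
/- Let c1, c2, c3 be real numbers and suppose j, k ∈ {1,2,3,4} with j ≠ k satisfy h_j − h_k = π. Then the two states ψ± = (Ψ_j ± i Ψ_k)/√2 are orthonormal product states (unit vectors with concurrence 0 that are orthogonal to each other), and their images U_d(c1,c2,c3)·ψ+ and U_d(c1,c2,c3)·ψ− are orthonormal maximally entangled states (unit vectors with concurrence 1 that are orthogonal to each other). -/
open Matrix Complex
open scoped Matrix Kronecker

noncomputable section

/-- Pauli matrices -/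
def σx : Matrix (Fin 2) (Fin 2) ℂ := !![0, 1; 1, 0]
def σy : Matrix (Fin 2) (Fin 2) ℂ := !![0, -Complex.I; Complex.I, 0]
def σz : Matrix (Fin 2) (Fin 2) ℂ := !![1, 0; 0, -1]

/-- H(c₁,c₂,c₃) = c₁ σx⊗σx + c₂ σy⊗σy + c₃ σz⊗σz -/
def Hmat (c1 c2 c3 : ℝ) : Matrix (Fin 2 × Fin 2) (Fin 2 × Fin 2) ℂ :=
  (c1 : ℂ) • (σx ⊗ₖ σx) + (c2 : ℂ) • (σy ⊗ₖ σy) + (c3 : ℂ) • (σz ⊗ₖ σz)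

/-- U_d(c₁,c₂,c₃) = exp(i H(c₁,c₂,c₃)/2) (matrix exponential) -/
def Ud (c1 c2 c3 : ℝ) : Matrix (Fin 2 × Fin 2) (Fin 2 × Fin 2) ℂ :=
  NormedSpace.exp ((Complex.I / 2) • Hmat c1 c2 c3)

/-- h₁ = c₁−c₂+c₃, h₂ = c₁+c₂−c₃, h₃ = −c₁−c₂−c₃, h₄ = −c₁+c₂+c₃ -/
def hval (c1 c2 c3 : ℝ) : Fin 4 → ℝ :=
  ![c1 - c2 + c3, c1 + c2 - c3, -c1 - c2 - c3, -c1 + c2 + c3]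

/-- computational basis vector |ab⟩ of ℂ⁴ = ℂ²⊗ℂ², indexed by pairs -/
def ket (a b : Fin 2) : Fin 2 × Fin 2 → ℂ := fun p => if p = (a, b) then 1 else 0

/-- the magic basis Ψ₁, Ψ₂, Ψ₃, Ψ₄ -/
def Psi : Fin 4 → (Fin 2 × Fin 2 → ℂ) :=
  ![((Real.sqrt 2 : ℂ))⁻¹ • (ket 0 0 + ket 1 1),
    (Complex.I * ((Real.sqrt 2 : ℂ))⁻¹) • (ket 0 1 + ket 1 0),
    ((Real.sqrt 2 : ℂ))⁻¹ • (ket 0 1 - ket 1 0),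
    (Complex.I * ((Real.sqrt 2 : ℂ))⁻¹) • (ket 0 0 - ket 1 1)]

/-- concurrence C = 2|αδ − βγ| of a two-qubit state with components (α,β,γ,δ) -/
def conc (v : Fin 2 × Fin 2 → ℂ) : ℝ :=
  2 * ‖v (0, 0) * v (1, 1) - v (0, 1) * v (1, 0)‖

/-- hermitian inner product on ℂ⁴ -/
def ip (v w : Fin 2 × Fin 2 → ℂ) : ℂ :=
  ∑ p : Fin 2 × Fin 2, (starRingEnd ℂ) (v p) * w p

/-! ### Auxiliary definitions and lemmas -/

/-- the quadratic form whose absolute value (doubled) is the concurrence -/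
def Qf (v : Fin 2 × Fin 2 → ℂ) : ℂ := v (0,0) * v (1,1) - v (0,1) * v (1,0)

/-- the associated symmetric bilinear form -/
def Bf (v w : Fin 2 × Fin 2 → ℂ) : ℂ :=
  v (0,0) * w (1,1) + w (0,0) * v (1,1) - v (0,1) * w (1,0) - w (0,1) * v (1,0)

lemma s_mul_s : ((Real.sqrt 2 : ℂ))⁻¹ * ((Real.sqrt 2 : ℂ))⁻¹ = 2⁻¹ := by
  rw [← mul_inv, ← Complex.ofReal_mul, Real.mul_self_sqrt (by norm_num)]
  norm_num

lemma sq2 : ((Real.sqrt 2 : ℝ) : ℂ) ^ 2 = 2 := by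
  rw [← Complex.ofReal_pow, Real.sq_sqrt (by norm_num)]
  norm_num

lemma conj_s : (starRingEnd ℂ) ((Real.sqrt 2 : ℂ))⁻¹ = ((Real.sqrt 2 : ℂ))⁻¹ := by
  rw [map_inv₀, Complex.conj_ofReal]

lemma exp_mulVec_eigen {n : Type*} [Fintype n] [DecidableEq n]
    (A : Matrix n n ℂ) (v : n → ℂ) (μ : ℂ)
    (h : A.mulVec v = μ • v) :
    (NormedSpace.exp A).mulVec v = Complex.exp μ • v := by
  letI : SeminormedRing (Matrix n n ℂ) := Matrix.linftyOpSemiNormedRing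
  letI : NormedRing (Matrix n n ℂ) := Matrix.linftyOpNormedRing
  letI : NormedAlgebra ℂ (Matrix n n ℂ) := Matrix.linftyOpNormedAlgebra
  have hpow : ∀ m : ℕ, (A ^ m).mulVec v = μ ^ m • v := by
    intro m
    induction m with
    | zero => simp [Matrix.one_mulVec]
    | succ m ih =>
      rw [pow_succ, ← Matrix.mulVec_mulVec, h, Matrix.mulVec_smul, ih, smul_smul, pow_succ]
      ring_nf
  let f : Matrix n n ℂ →ₗ[ℂ] (n → ℂ) :=
    { toFun := fun B => B.mulVec v
      map_add' := fun B C => Matrix.add_mulVec B C v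
      map_smul' := fun c B => Matrix.smul_mulVec c B v }
  let L : Matrix n n ℂ →L[ℂ] (n → ℂ) := LinearMap.toContinuousLinearMap f
  have hLf : ∀ B, L B = B.mulVec v := fun B => rfl
  have hsum : Summable fun m : ℕ => ((m.factorial : ℂ))⁻¹ • A ^ m :=
    NormedSpace.expSeries_summable' A
  have h1 : (NormedSpace.exp A).mulVec v = L (∑' m : ℕ, ((m.factorial : ℂ))⁻¹ • A ^ m) := by
    rw [hLf, NormedSpace.exp_eq_tsum (𝕂 := ℂ)]
  rw [h1, L.map_tsum hsum]
  have h2 : ∀ m : ℕ, L (((m.factorial : ℂ))⁻¹ • A ^ m) = (((m.factorial : ℂ))⁻¹ * μ ^ m) • v := by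
    intro m
    rw [L.map_smul, hLf, hpow m, smul_smul]
  simp_rw [h2]
  have hsum2 : Summable fun m : ℕ => ((m.factorial : ℂ))⁻¹ * μ ^ m := by
    simpa [smul_eq_mul] using NormedSpace.expSeries_summable' (𝕂 := ℂ) μ
  rw [Summable.tsum_smul_const]
  · congr 1
    rw [Complex.exp_eq_exp_ℂ, NormedSpace.exp_eq_tsum (𝕂 := ℂ)]
    simp [smul_eq_mul]
  · exact hsum2

set_option maxHeartbeats 2000000 in
lemma Hmat_eigen (c1 c2 c3 : ℝ) (m : Fin 4) :
    (Hmat c1 c2 c3).mulVec (Psi m) = ((hval c1 c2 c3 m : ℝ) : ℂ) • Psi m := by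
  fin_cases m <;> funext p <;> fin_cases p <;>
    simp [Hmat, Psi, ket, hval, Matrix.mulVec, dotProduct, Fintype.sum_prod_type,
      σx, σy, σz, Fin.sum_univ_two, Prod.ext_iff, Matrix.kroneckerMap_apply] <;>
    ring

set_option maxHeartbeats 2000000 in
lemma ip_Psi (j k : Fin 4) : ip (Psi j) (Psi k) = if j = k then 1 else 0 := by
  fin_cases j <;> fin_cases k <;>
    simp [ip, Psi, ket, Fintype.sum_prod_type, Fin.sum_univ_two, Prod.ext_iff,
      _root_.map_mul, map_inv₀, Complex.conj_ofReal, Complex.conj_I] <;>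
    ring_nf <;>
    simp [s_mul_s, sq2, Complex.ext_iff] <;>
    norm_num [sq2]

set_option maxHeartbeats 2000000 in
lemma Qf_Psi (m : Fin 4) : Qf (Psi m) = 2⁻¹ := by
  fin_cases m <;>
    simp [Qf, Psi, ket, Prod.ext_iff] <;>
    ring_nf <;>
    simp [s_mul_s, sq2, Complex.ext_iff] <;>
    norm_num [sq2]

set_option maxHeartbeats 2000000 in
lemma Bf_Psi (j k : Fin 4) (h : j ≠ k) : Bf (Psi j) (Psi k) = 0 := by
  fin_cases j <;> fin_cases k <;>
    first
      | exact absurd rfl h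
      | (simp [Bf, Psi, ket, Prod.ext_iff] <;> ring_nf)

lemma ip_add_left (v v' w : Fin 2 × Fin 2 → ℂ) : ip (v + v') w = ip v w + ip v' w := by
  simp [ip, add_mul, Finset.sum_add_distrib]

lemma ip_add_right (v w w' : Fin 2 × Fin 2 → ℂ) : ip v (w + w') = ip v w + ip v w' := by
  simp [ip, mul_add, Finset.sum_add_distrib]

lemma ip_smul_left (a : ℂ) (v w : Fin 2 × Fin 2 → ℂ) :
    ip (a • v) w = (starRingEnd ℂ) a * ip v w := by
  simp [ip, Finset.mul_sum, mul_assoc]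

lemma ip_smul_right (a : ℂ) (v w : Fin 2 × Fin 2 → ℂ) :
    ip v (a • w) = a * ip v w := by
  simp [ip, Finset.mul_sum]
  congr 1
  funext p
  ring

lemma ip_comb (j k : Fin 4) (hjk : j ≠ k) (a b c d : ℂ) :
    ip (a • Psi j + b • Psi k) (c • Psi j + d • Psi k)
      = (starRingEnd ℂ) a * c + (starRingEnd ℂ) b * d := by
  simp [ip_add_left, ip_add_right, ip_smul_left, ip_smul_right, ip_Psi, hjk, Ne.symm hjk]
  ring

lemma ip_ss (j k : Fin 4) (hjk : j ≠ k) (a b c d : ℂ) :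
    ip (((Real.sqrt 2 : ℂ))⁻¹ • (a • Psi j + b • Psi k))
       (((Real.sqrt 2 : ℂ))⁻¹ • (c • Psi j + d • Psi k))
      = 2⁻¹ * ((starRingEnd ℂ) a * c + (starRingEnd ℂ) b * d) := by
  rw [ip_smul_left, ip_smul_right, conj_s, ← mul_assoc, s_mul_s, ip_comb j k hjk]

lemma Qf_comb (a b : ℂ) (v w : Fin 2 × Fin 2 → ℂ) :
    Qf (a • v + b • w) = a ^ 2 * Qf v + b ^ 2 * Qf w + a * b * Bf v w := by
  simp [Qf, Bf]
  ring

lemma Qf_smul (a : ℂ) (v : Fin 2 × Fin 2 → ℂ) : Qf (a • v) = a ^ 2 * Qf v := by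
  simp [Qf]
  ring

lemma Qf_ss (j k : Fin 4) (hjk : j ≠ k) (a b : ℂ) :
    Qf (((Real.sqrt 2 : ℂ))⁻¹ • (a • Psi j + b • Psi k)) = (a ^ 2 + b ^ 2) / 4 := by
  rw [Qf_smul, Qf_comb, Qf_Psi, Qf_Psi, Bf_Psi j k hjk]
  rw [sq, s_mul_s]
  ring

lemma conc_eq (v : Fin 2 × Fin 2 → ℂ) : conc v = 2 * ‖Qf v‖ := rfl

/-- If h_j − h_k = π then ψ± = (Ψ_j ± iΨ_k)/√2 are orthonormal product states and
their images under U_d(c₁,c₂,c₃) are orthonormal maximally entangled states. -/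
theorem stmt0 (c1 c2 c3 : ℝ) (j k : Fin 4) (hjk : j ≠ k)
    (hπ : hval c1 c2 c3 j - hval c1 c2 c3 k = Real.pi)
    (ψp ψm : Fin 2 × Fin 2 → ℂ)
    (hψp : ψp = ((Real.sqrt 2 : ℂ))⁻¹ • (Psi j + Complex.I • Psi k))
    (hψm : ψm = ((Real.sqrt 2 : ℂ))⁻¹ • (Psi j - Complex.I • Psi k)) :
    ip ψp ψp = 1 ∧ ip ψm ψm = 1 ∧ conc ψp = 0 ∧ conc ψm = 0 ∧ ip ψp ψm = 0 ∧
    ip ((Ud c1 c2 c3).mulVec ψp) ((Ud c1 c2 c3).mulVec ψp) = 1 ∧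
    ip ((Ud c1 c2 c3).mulVec ψm) ((Ud c1 c2 c3).mulVec ψm) = 1 ∧
    conc ((Ud c1 c2 c3).mulVec ψp) = 1 ∧
    conc ((Ud c1 c2 c3).mulVec ψm) = 1 ∧
    ip ((Ud c1 c2 c3).mulVec ψp) ((Ud c1 c2 c3).mulVec ψm) = 0 := by
  have hψp' : ψp = ((Real.sqrt 2 : ℂ))⁻¹ • ((1 : ℂ) • Psi j + Complex.I • Psi k) := by
    rw [hψp, one_smul]
  have hψm' : ψm = ((Real.sqrt 2 : ℂ))⁻¹ • ((1 : ℂ) • Psi j + (-Complex.I) • Psi k) := by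
    rw [hψm, one_smul, neg_smul, sub_eq_add_neg]
  set hj : ℝ := hval c1 c2 c3 j with hhj
  set hk : ℝ := hval c1 c2 c3 k with hhk
  set ej : ℂ := Complex.exp (Complex.I / 2 * hj) with hej
  set ek : ℂ := Complex.exp (Complex.I / 2 * hk) with hek
  -- eigenvector relations
  have hUj : (Ud c1 c2 c3).mulVec (Psi j) = ej • Psi j := by
    apply exp_mulVec_eigen
    rw [Matrix.smul_mulVec, Hmat_eigen, smul_smul]
  have hUk : (Ud c1 c2 c3).mulVec (Psi k) = ek • Psi k := by
    apply exp_mulVec_eigen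
    rw [Matrix.smul_mulVec, Hmat_eigen, smul_smul]
  have hUp : (Ud c1 c2 c3).mulVec ψp
      = ((Real.sqrt 2 : ℂ))⁻¹ • (ej • Psi j + (Complex.I * ek) • Psi k) := by
    rw [hψp, Matrix.mulVec_smul, Matrix.mulVec_add, Matrix.mulVec_smul, hUj, hUk, smul_smul]
  have hUm : (Ud c1 c2 c3).mulVec ψm
      = ((Real.sqrt 2 : ℂ))⁻¹ • (ej • Psi j + (-(Complex.I * ek)) • Psi k) := by
    rw [hψm, sub_eq_add_neg, Matrix.mulVec_smul, Matrix.mulVec_add, Matrix.mulVec_neg,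
      Matrix.mulVec_smul, hUj, hUk, smul_smul, ← neg_smul]
  -- facts about the eigenvalue phases
  have hcj : (starRingEnd ℂ) ej * ej = 1 := by
    rw [hej, ← Complex.exp_conj, ← Complex.exp_add]
    have : (starRingEnd ℂ) (Complex.I / 2 * hj) + Complex.I / 2 * hj = 0 := by
      simp only [_root_.map_mul, map_div₀, Complex.conj_I, Complex.conj_ofReal, map_ofNat]
      ring
    rw [this, Complex.exp_zero]
  have hck : (starRingEnd ℂ) ek * ek = 1 := by
    rw [hek, ← Complex.exp_conj, ← Complex.exp_add]
    have : (starRingEnd ℂ) (Complex.I / 2 * hk) + Complex.I / 2 * hk = 0 := by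
      simp only [_root_.map_mul, map_div₀, Complex.conj_I, Complex.conj_ofReal, map_ofNat]
      ring
    rw [this, Complex.exp_zero]
  have habsk : ‖ek‖ = 1 := by
    rw [hek, Complex.norm_exp]
    have : (Complex.I / 2 * hk).re = 0 := by simp
    rw [this, Real.exp_zero]
  have hsq : ej ^ 2 = -(ek ^ 2) := by
    have hjk' : (hj : ℂ) = (hk : ℂ) + Real.pi := by
      rw [← Complex.ofReal_add]
      norm_cast
      linarith [hπ]
    rw [hej, hek, ← Complex.exp_nat_mul, ← Complex.exp_nat_mul]
    rw [hjk']
    rw [show ((2 : ℕ) : ℂ) * (Complex.I / 2 * ((hk : ℂ) + Real.pi))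
        = Complex.I * hk + Real.pi * Complex.I by push_cast; ring]
    rw [Complex.exp_add, Complex.exp_pi_mul_I]
    rw [show ((2 : ℕ) : ℂ) * (Complex.I / 2 * (hk : ℂ)) = Complex.I * hk by push_cast; ring]
    ring
  refine ⟨?_, ?_, ?_, ?_, ?_, ?_, ?_, ?_, ?_, ?_⟩
  · rw [hψp', ip_ss j k hjk]
    simp only [_root_.map_one, Complex.conj_I]
    linear_combination -2⁻¹ * Complex.I_sq
  · rw [hψm', ip_ss j k hjk]
    simp only [_root_.map_one, map_neg, Complex.conj_I]
    linear_combination -2⁻¹ * Complex.I_sq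
  · rw [hψp', conc_eq, Qf_ss j k hjk,
      show ((1 : ℂ) ^ 2 + Complex.I ^ 2) / 4 = 0 by rw [Complex.I_sq]; ring]
    simp
  · rw [hψm', conc_eq, Qf_ss j k hjk,
      show ((1 : ℂ) ^ 2 + (-Complex.I) ^ 2) / 4 = 0 by rw [neg_sq, Complex.I_sq]; ring]
    simp
  · rw [hψp', hψm', ip_ss j k hjk]
    simp only [_root_.map_one, map_neg, Complex.conj_I]
    linear_combination 2⁻¹ * Complex.I_sq
  · rw [hUp, ip_ss j k hjk]
    simp only [map_neg, _root_.map_mul, Complex.conj_I]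
    linear_combination 2⁻¹ * hcj + 2⁻¹ * hck
      - 2⁻¹ * (starRingEnd ℂ) ek * ek * Complex.I_sq
  · rw [hUm, ip_ss j k hjk]
    simp only [map_neg, _root_.map_mul, Complex.conj_I]
    linear_combination 2⁻¹ * hcj + 2⁻¹ * hck
      - 2⁻¹ * (starRingEnd ℂ) ek * ek * Complex.I_sq
  · rw [hUp, conc_eq, Qf_ss j k hjk]
    rw [show (Complex.I * ek) ^ 2 = -(ek ^ 2) by rw [mul_pow, Complex.I_sq]; ring]
    rw [hsq]
    rw [show (-(ek ^ 2) + -(ek ^ 2)) / 4 = -(ek ^ 2) / 2 by ring]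
    rw [norm_div, norm_neg, norm_pow, habsk]
    norm_num
  · rw [hUm, conc_eq, Qf_ss j k hjk]
    rw [show (-(Complex.I * ek)) ^ 2 = -(ek ^ 2) by rw [neg_pow, mul_pow, Complex.I_sq]; ring]
    rw [hsq]
    rw [show (-(ek ^ 2) + -(ek ^ 2)) / 4 = -(ek ^ 2) / 2 by ring]
    rw [norm_div, norm_neg, norm_pow, habsk]
    norm_num
  · rw [hUp, hUm, ip_ss j k hjk]
    simp only [map_neg, _root_.map_mul, Complex.conj_I]
    linear_combination 2⁻¹ * hcj - 2⁻¹ * hck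
      + 2⁻¹ * (starRingEnd ℂ) ek * ek * Complex.I_sq
end
end

section
/- For all real numbers c1, c2, c3, the entangling power e_p(c1,c2,c3) equals one twelfth of the mean squared chord length: (1/18)·[3 − (cos(2c1)cos(2c2) + cos(2c2)cos(2c3) + cos(2c3)cos(2c1))] = (1/72)·Σ_{1≤j<k≤4} |e^{i h_j} − e^{i h_k}|². -/
open Matrix Complex
open scoped Matrix Kronecker

noncomputable section

lemma chord (a b : ℝ) :
    ‖Complex.exp (Complex.I * (a : ℂ)) - Complex.exp (Complex.I * (b : ℂ))‖ ^ 2 =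
    2 - 2 * Real.cos (a - b) := by
  rw [Complex.sq_norm]
  simp only [Complex.normSq_apply, Complex.sub_re, Complex.sub_im, Complex.exp_re,
    Complex.exp_im, Complex.mul_re, Complex.mul_im, Complex.I_re, Complex.I_im,
    Complex.ofReal_re, Complex.ofReal_im, Real.cos_sub]
  simp only [zero_mul, one_mul, mul_zero, mul_one, zero_sub, zero_add, sub_zero,
    neg_neg, Real.exp_zero]
  nlinarith [Real.sin_sq_add_cos_sq a, Real.sin_sq_add_cos_sq b]

/-- The entangling power e_p(c₁,c₂,c₃) equals one twelfth of the mean squared chord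
length, i.e. (1/72) of the sum of the six squared chord lengths. -/
theorem stmt7 (c1 c2 c3 : ℝ) :
    (1 / 18 : ℝ) * (3 - (Real.cos (2 * c1) * Real.cos (2 * c2) +
        Real.cos (2 * c2) * Real.cos (2 * c3) + Real.cos (2 * c3) * Real.cos (2 * c1))) =
    (1 / 72 : ℝ) *
      (‖Complex.exp (Complex.I * (hval c1 c2 c3 0 : ℂ)) -
          Complex.exp (Complex.I * (hval c1 c2 c3 1 : ℂ))‖ ^ 2 +
        ‖Complex.exp (Complex.I * (hval c1 c2 c3 0 : ℂ)) -
          Complex.exp (Complex.I * (hval c1 c2 c3 2 : ℂ))‖ ^ 2 +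
        ‖Complex.exp (Complex.I * (hval c1 c2 c3 0 : ℂ)) -
          Complex.exp (Complex.I * (hval c1 c2 c3 3 : ℂ))‖ ^ 2 +
        ‖Complex.exp (Complex.I * (hval c1 c2 c3 1 : ℂ)) -
          Complex.exp (Complex.I * (hval c1 c2 c3 2 : ℂ))‖ ^ 2 +
        ‖Complex.exp (Complex.I * (hval c1 c2 c3 1 : ℂ)) -
          Complex.exp (Complex.I * (hval c1 c2 c3 3 : ℂ))‖ ^ 2 +
        ‖Complex.exp (Complex.I * (hval c1 c2 c3 2 : ℂ)) -
          Complex.exp (Complex.I * (hval c1 c2 c3 3 : ℂ))‖ ^ 2) := by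
  simp only [hval, Matrix.cons_val_zero, Matrix.cons_val_one, Matrix.head_cons,
    Matrix.cons_val_two, Matrix.tail_cons, Matrix.cons_val_three, chord]
  ring_nf
  rw [show -(c2*2) + c3*2 = -(c2*2 - c3*2) by ring,
      show -(c2*2) - c3*2 = -(c2*2 + c3*2) by ring]
  simp only [Real.cos_neg, Real.cos_add, Real.cos_sub]
  ring
end
end

section
/- Let φ : Fin 4 → ℂ and h : Fin 4 → ℝ satisfy Σ_j φ_j² = 0, Σ_j |φ_j|² = 1, and |Σ_j φ_j² e^{i h_j}| = 1. Then Σ_j |φ_j|² e^{i h_j} = 0. -/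
open Matrix Complex
open scoped Matrix Kronecker

noncomputable section

/-- If Σ φ_j² = 0, Σ |φ_j|² = 1 and |Σ φ_j² e^{i h_j}| = 1, then Σ |φ_j|² e^{i h_j} = 0. -/
theorem stmt8 (φ : Fin 4 → ℂ) (h : Fin 4 → ℝ)
    (h1 : ∑ j, (φ j) ^ 2 = 0)
    (h2 : ∑ j, ‖φ j‖ ^ 2 = 1)
    (h3 : ‖∑ j, (φ j) ^ 2 * Complex.exp (Complex.I * (h j : ℂ))‖ = 1) :
    ∑ j, ((‖φ j‖ : ℂ)) ^ 2 * Complex.exp (Complex.I * (h j : ℂ)) = 0 := by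
  set z : Fin 4 → ℂ := fun j => (φ j)^2 * Complex.exp (Complex.I * (h j : ℂ)) with hz
  set c : ℂ := ∑ j, z j with hc
  have hcabs : ‖c‖ = 1 := h3
  have habs_exp : ∀ j, ‖Complex.exp (Complex.I * (h j : ℂ))‖ = 1 := by
    intro j
    rw [mul_comm]
    exact Complex.norm_exp_ofReal_mul_I _
  have habsz : ∀ j, ‖z j‖ = ‖φ j‖ ^ 2 := by
    intro j
    simp [hz, norm_mul, norm_pow, habs_exp]
  have hcc : (starRingEnd ℂ c) * c = 1 := by
    rw [Complex.conj_mul']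
    norm_cast
    rw [hcabs]; norm_num
  have hle : ∀ j ∈ Finset.univ, ((starRingEnd ℂ c) * z j).re ≤ ‖z j‖ := by
    intro j _
    calc ((starRingEnd ℂ c) * z j).re ≤ ‖(starRingEnd ℂ c) * z j‖ :=
          Complex.re_le_norm _
      _ = ‖z j‖ := by rw [norm_mul, Complex.norm_conj, hcabs, one_mul]
  have hsum : ∑ j, ((starRingEnd ℂ c) * z j).re = ∑ j, ‖z j‖ := by
    have e1 : ∑ j, ((starRingEnd ℂ c) * z j).re = ((starRingEnd ℂ c) * c).re := by
      rw [hc, Finset.mul_sum, Complex.re_sum]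
    have e2 : ∑ j, ‖z j‖ = 1 := by
      simp only [habsz]; exact h2
    rw [e1, hcc, e2, Complex.one_re]
  have heq : ∀ j, ((starRingEnd ℂ c) * z j).re = ‖z j‖ := by
    intro j
    have := (Finset.sum_eq_sum_iff_of_le hle).mp hsum j (Finset.mem_univ j)
    linarith [this]
  have hwreal : ∀ j, (starRingEnd ℂ c) * z j = (‖z j‖ : ℂ) := by
    intro j
    have habsw : ‖(starRingEnd ℂ c) * z j‖ = ‖z j‖ := by
      rw [norm_mul, Complex.norm_conj, hcabs, one_mul]
    set w := (starRingEnd ℂ c) * z j with hw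
    have him : w.im = 0 := by
      have h1' : ‖w‖^2 = w.re^2 + w.im^2 := by
        rw [Complex.sq_norm, Complex.normSq_apply]; ring
      have h2' : ‖w‖ = w.re := by rw [habsw, ← heq j]
      have h3' : w.im ^ 2 = 0 := by rw [h2'] at h1'; linarith
      exact sq_eq_zero_iff.mp h3'
    have : w = (w.re : ℂ) := by
      apply Complex.ext <;> simp [him]
    rw [this, heq j, ← habsw, hw]
  have hzj : ∀ j, z j = c * (‖z j‖ : ℂ) := by
    intro j
    have := congrArg (fun x => c * x) (hwreal j)
    calc z j = (c * (starRingEnd ℂ c)) * z j := by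
            rw [mul_comm c, hcc, one_mul]
      _ = c * ((starRingEnd ℂ c) * z j) := by ring
      _ = c * (‖z j‖ : ℂ) := by rw [hwreal j]
  have hphi : ∀ j, (φ j)^2 = c * (‖z j‖ : ℂ) * Complex.exp (-(Complex.I * (h j : ℂ))) := by
    intro j
    have : z j * Complex.exp (-(Complex.I * (h j : ℂ))) = (φ j)^2 := by
      rw [hz]
      simp only
      rw [mul_assoc, ← Complex.exp_add]
      simp
    rw [← this]
    conv_lhs => rw [hzj j]
  have hS : c * ∑ j, (‖z j‖ : ℂ) * Complex.exp (-(Complex.I * (h j : ℂ))) = 0 := by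
    rw [Finset.mul_sum]
    rw [← h1]
    apply Finset.sum_congr rfl
    intro j _
    rw [hphi j, mul_assoc]
  have hcne : c ≠ 0 := by
    intro h0; rw [h0] at hcabs; simp at hcabs
  have hS0 : ∑ j, (‖z j‖ : ℂ) * Complex.exp (-(Complex.I * (h j : ℂ))) = 0 := by
    rcases mul_eq_zero.mp hS with h' | h'
    · exact absurd h' hcne
    · exact h'
  have := congrArg (starRingEnd ℂ) hS0
  rw [map_sum, map_zero] at this
  rw [← this]
  apply Finset.sum_congr rfl
  intro j _
  rw [_root_.map_mul, ← Complex.exp_conj]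
  congr 1
  · rw [Complex.conj_ofReal, habsz j]; norm_cast
  · congr 1
    simp [Complex.ext_iff]
end
end

section
/- For every real number c2, the local invariants of the special perfect entangler U = U_d(π/2, c2, 0) are G1(U) = 0 and G2(U) = cos(2c2). -/
open Matrix Complex
open scoped Matrix Kronecker

noncomputable section

/-- the index identification (a,b) ↦ 2a+b matching the ordered basis (|00⟩,|01⟩,|10⟩,|11⟩) -/
def idx : Fin 2 × Fin 2 → Fin 4 :=
  fun p => ⟨2 * p.1.1 + p.2.1, by have h1 := p.1.isLt; have h2 := p.2.isLt; omega⟩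

/-- the magic-basis change matrix Q -/
def Qmat : Matrix (Fin 2 × Fin 2) (Fin 2 × Fin 2) ℂ :=
  Matrix.of fun p q =>
    ((Real.sqrt 2 : ℂ))⁻¹ *
      (!![1, 0, 0, Complex.I;
          0, Complex.I, 1, 0;
          0, Complex.I, -1, 0;
          1, 0, 0, -Complex.I]) (idx p) (idx q)

/-- m(U) = (Q† U Q)ᵀ (Q† U Q) -/
def mMat (U : Matrix (Fin 2 × Fin 2) (Fin 2 × Fin 2) ℂ) :
    Matrix (Fin 2 × Fin 2) (Fin 2 × Fin 2) ℂ :=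
  (Qmatᴴ * U * Qmat)ᵀ * (Qmatᴴ * U * Qmat)

/-- local invariant G₁(U) = tr(m(U))²/(16 det U) -/
def G1 (U : Matrix (Fin 2 × Fin 2) (Fin 2 × Fin 2) ℂ) : ℂ :=
  (Matrix.trace (mMat U)) ^ 2 / (16 * U.det)

/-- local invariant G₂(U) = (tr(m(U))² − tr(m(U)²))/(4 det U) -/
def G2 (U : Matrix (Fin 2 × Fin 2) (Fin 2 × Fin 2) ℂ) : ℂ :=
  ((Matrix.trace (mMat U)) ^ 2 - Matrix.trace (mMat U * mMat U)) / (4 * U.det)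

def dvec (c2 : ℝ) : Fin 2 × Fin 2 → ℂ := fun p =>
  (![((Real.pi/2 - c2 : ℝ) : ℂ), ((Real.pi/2 + c2 : ℝ) : ℂ),
     ((-(Real.pi/2 + c2) : ℝ) : ℂ), ((-(Real.pi/2 - c2) : ℝ) : ℂ)]) (idx p)

lemma sqrt2_mul : ((Real.sqrt 2 : ℝ) : ℂ) * ((Real.sqrt 2 : ℝ) : ℂ) = 2 := by
  rw [← Complex.ofReal_mul, Real.mul_self_sqrt (by norm_num)]; norm_num

lemma hQQ : Qmat * Qmatᴴ = 1 := by
  ext p q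
  fin_cases p <;> fin_cases q <;>
    simp [Qmat, idx, Matrix.mul_apply, Matrix.conjTranspose_apply, Fintype.sum_prod_type,
      Fin.sum_univ_two, Matrix.one_apply, Prod.ext_iff] <;>
    (try field_simp) <;> linear_combination (norm := ring_nf) -sqrt2_mul
  all_goals simp [Complex.I_sq, ← Complex.ofReal_pow]
  all_goals norm_num

lemma hQQ' : Qmatᴴ * Qmat = 1 := mul_eq_one_comm.mp hQQ

set_option maxHeartbeats 1000000 in
lemma hHQ (c2 : ℝ) : Hmat (Real.pi/2) c2 0 * Qmat = Qmat * Matrix.diagonal (dvec c2) := by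
  ext p q
  fin_cases p <;> fin_cases q <;>
    simp [Hmat, Qmat, σx, σy, σz, dvec, idx, Matrix.mul_apply, Fintype.sum_prod_type,
      Fin.sum_univ_two, Matrix.diagonal, Matrix.kroneckerMap_apply] <;> ring

lemma hH (c2 : ℝ) : Hmat (Real.pi/2) c2 0 = Qmat * Matrix.diagonal (dvec c2) * Qmatᴴ := by
  calc Hmat (Real.pi/2) c2 0 = Hmat (Real.pi/2) c2 0 * (Qmat * Qmatᴴ) := by rw [hQQ, mul_one]
  _ = (Hmat (Real.pi/2) c2 0 * Qmat) * Qmatᴴ := by rw [mul_assoc]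
  _ = _ := by rw [hHQ]

def evec (c2 : ℝ) : Fin 2 × Fin 2 → ℂ := fun p => Complex.exp (Complex.I / 2 * dvec c2 p)

lemma hUd (c2 : ℝ) :
    Ud (Real.pi/2) c2 0 = Qmat * Matrix.diagonal (evec c2) * Qmatᴴ := by
  have hdet : IsUnit Qmat.det := Matrix.isUnit_det_of_right_inverse hQQ
  have hinv : Qmat⁻¹ = Qmatᴴ := Matrix.inv_eq_right_inv hQQ
  have h1 : (Complex.I / 2) • Hmat (Real.pi/2) c2 0
      = Qmat * Matrix.diagonal ((Complex.I / 2) • dvec c2) * Qmat⁻¹ := by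
    rw [hinv, hH, Matrix.diagonal_smul, Matrix.mul_smul, Matrix.smul_mul]
  rw [Ud, h1, Matrix.exp_conj Qmat _ ((Matrix.isUnit_iff_isUnit_det _).mpr hdet),
    Matrix.exp_diagonal, hinv]
  have he : NormedSpace.exp ((Complex.I / 2) • dvec c2) = evec c2 := by
    funext p
    rw [Pi.exp_def]
    simp [evec, Pi.smul_apply, smul_eq_mul, ← Complex.exp_eq_exp_ℂ]
  rw [he]

lemma hconj (c2 : ℝ) : Qmatᴴ * Ud (Real.pi/2) c2 0 * Qmat = Matrix.diagonal (evec c2) := by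
  rw [hUd, ← mul_assoc, ← mul_assoc, hQQ', one_mul, mul_assoc, hQQ', mul_one]

lemma hm (c2 : ℝ) : mMat (Ud (Real.pi/2) c2 0)
    = Matrix.diagonal (fun p => evec c2 p * evec c2 p) := by
  rw [mMat, hconj, Matrix.diagonal_transpose, Matrix.diagonal_mul_diagonal]

lemma h2exp (x : ℝ) : Complex.exp (Complex.I/2 * x) ^ 2
    = ((Real.cos x : ℝ) : ℂ) + ((Real.sin x : ℝ) : ℂ) * Complex.I := by
  rw [← Complex.exp_nat_mul, show ((2:ℕ):ℂ) * (Complex.I/2 * x) = (x:ℂ) * Complex.I by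
    push_cast; ring, Complex.exp_mul_I, ← Complex.ofReal_cos, ← Complex.ofReal_sin]

lemma h4exp (x : ℝ) : Complex.exp (Complex.I/2 * x) ^ 4
    = ((Real.cos (2*x) : ℝ) : ℂ) + ((Real.sin (2*x) : ℝ) : ℂ) * Complex.I := by
  rw [← Complex.exp_nat_mul, show ((4:ℕ):ℂ) * (Complex.I/2 * x) = ((2*x : ℝ):ℂ) * Complex.I by
    push_cast; ring, Complex.exp_mul_I, ← Complex.ofReal_cos, ← Complex.ofReal_sin]

lemma htr1 (c2 : ℝ) : Matrix.trace (mMat (Ud (Real.pi/2) c2 0)) = 0 := by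
  rw [hm, Matrix.trace_diagonal]
  have : ∀ p, evec c2 p * evec c2 p = Complex.exp (Complex.I/2 * dvec c2 p) ^ 2 :=
    fun p => by rw [evec]; ring
  simp only [this]
  simp only [Fintype.sum_prod_type, Fin.sum_univ_two, dvec, idx]
  norm_num
  rw [show ((Real.pi:ℂ)/2 - (c2:ℂ)) = ((Real.pi/2 - c2 : ℝ) : ℂ) by push_cast; ring,
    show ((Real.pi:ℂ)/2 + (c2:ℂ)) = ((Real.pi/2 + c2 : ℝ) : ℂ) by push_cast; ring,
    show (-(c2:ℂ) + -((Real.pi:ℂ)/2)) = ((-(Real.pi/2 + c2) : ℝ) : ℂ) by push_cast; ring,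
    show ((c2:ℂ) - (Real.pi:ℂ)/2) = ((-(Real.pi/2 - c2) : ℝ) : ℂ) by push_cast; ring]
  simp only [h2exp]
  rw [Complex.ext_iff]
  constructor <;>
  · simp [Real.cos_neg, Real.sin_neg, Real.cos_sub, Real.cos_add, Real.sin_sub, Real.sin_add]
    try ring

lemma htr2 (c2 : ℝ) : Matrix.trace (mMat (Ud (Real.pi/2) c2 0) * mMat (Ud (Real.pi/2) c2 0))
    = -4 * Real.cos (2 * c2) := by
  rw [hm, Matrix.diagonal_mul_diagonal, Matrix.trace_diagonal]
  have : ∀ p, (evec c2 p * evec c2 p) * (evec c2 p * evec c2 p)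
      = Complex.exp (Complex.I/2 * dvec c2 p) ^ 4 := fun p => by rw [evec]; ring
  simp only [this]
  simp only [Fintype.sum_prod_type, Fin.sum_univ_two, dvec, idx]
  norm_num
  rw [show ((Real.pi:ℂ)/2 - (c2:ℂ)) = ((Real.pi/2 - c2 : ℝ) : ℂ) by push_cast; ring,
    show ((Real.pi:ℂ)/2 + (c2:ℂ)) = ((Real.pi/2 + c2 : ℝ) : ℂ) by push_cast; ring,
    show (-(c2:ℂ) + -((Real.pi:ℂ)/2)) = ((-(Real.pi/2 + c2) : ℝ) : ℂ) by push_cast; ring,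
    show ((c2:ℂ) - (Real.pi:ℂ)/2) = ((-(Real.pi/2 - c2) : ℝ) : ℂ) by push_cast; ring]
  simp only [h4exp]
  have k1 : Real.cos (2 * (Real.pi/2 - c2)) = -Real.cos (2*c2) := by
    rw [show 2 * (Real.pi/2 - c2) = Real.pi - 2*c2 by ring, Real.cos_pi_sub]
  have k2 : Real.sin (2 * (Real.pi/2 - c2)) = Real.sin (2*c2) := by
    rw [show 2 * (Real.pi/2 - c2) = Real.pi - 2*c2 by ring, Real.sin_pi_sub]
  have k3 : Real.cos (2 * (Real.pi/2 + c2)) = -Real.cos (2*c2) := by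
    rw [show 2 * (Real.pi/2 + c2) = Real.pi + 2*c2 by ring, Real.cos_add]
    simp [Real.cos_pi, Real.sin_pi]
  have k4 : Real.sin (2 * (Real.pi/2 + c2)) = -Real.sin (2*c2) := by
    rw [show 2 * (Real.pi/2 + c2) = Real.pi + 2*c2 by ring, Real.sin_add]
    simp [Real.cos_pi, Real.sin_pi]
  have k5 : Real.cos (2 * (-(Real.pi/2 + c2))) = -Real.cos (2*c2) := by
    rw [show 2 * (-(Real.pi/2 + c2)) = -(Real.pi + 2*c2) by ring, Real.cos_neg, Real.cos_add]
    simp [Real.cos_pi, Real.sin_pi]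
  have k6 : Real.sin (2 * (-(Real.pi/2 + c2))) = Real.sin (2*c2) := by
    rw [show 2 * (-(Real.pi/2 + c2)) = -(Real.pi + 2*c2) by ring, Real.sin_neg, Real.sin_add]
    simp [Real.cos_pi, Real.sin_pi]
  have k7 : Real.cos (2 * (-(Real.pi/2 - c2))) = -Real.cos (2*c2) := by
    rw [show 2 * (-(Real.pi/2 - c2)) = -(Real.pi - 2*c2) by ring, Real.cos_neg, Real.cos_pi_sub]
  have k8 : Real.sin (2 * (-(Real.pi/2 - c2))) = -Real.sin (2*c2) := by
    rw [show 2 * (-(Real.pi/2 - c2)) = -(Real.pi - 2*c2) by ring, Real.sin_neg, Real.sin_pi_sub]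
  rw [k1, k2, k3, k4, k5, k6, k7, k8]
  push_cast
  ring

lemma hdet (c2 : ℝ) : (Ud (Real.pi/2) c2 0).det = 1 := by
  rw [hUd, Matrix.det_mul, Matrix.det_mul,
    show Qmat.det * (Matrix.diagonal (evec c2)).det * Qmatᴴ.det
      = (Matrix.diagonal (evec c2)).det * (Qmat * Qmatᴴ).det by rw [Matrix.det_mul]; ring,
    hQQ, Matrix.det_one, mul_one, Matrix.det_diagonal]
  have hmulexp : ∀ z w : ℂ, Complex.exp z * Complex.exp w = Complex.exp (z + w) :=
    fun z w => (Complex.exp_add z w).symm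
  simp only [Fintype.prod_prod_type, Fin.prod_univ_two, evec, dvec, idx]
  norm_num
  simp only [hmulexp]
  rw [← Complex.exp_zero]
  congr 1
  push_cast
  ring


/-- The local invariants of the special perfect entangler U_d(π/2, c₂, 0) are
G₁ = 0 and G₂ = cos(2c₂). -/
theorem stmt11 (c2 : ℝ) :
    G1 (Ud (Real.pi / 2) c2 0) = 0 ∧
    G2 (Ud (Real.pi / 2) c2 0) = (Real.cos (2 * c2) : ℂ) := by
  simp only [G1, G2]
  rw [htr1, htr2, hdet]
  norm_num
end
end
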